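/- Let κ be a quaternionic spinor, and for each paravector v let D(v) be the 2×2 quaternionic matrix D(v) = κ·(conjugate transpose of κ̌v) + (κ̌v)·(conjugate transpose of κ). Then for all paravectors v, w: 2·( pdet(D(v)+D(w)) − pdet(D(v)) − pdet(D(w)) ) = −4 |κ|⁴ · Re(v w̄). (The left side is the Minkowski inner product ⟨D(v), D(w)⟩ in ℝ^{1,4} under the identification of paravector Hermitian matrices S with points p ∈ ℝ^{1,4} satisfying 4·pdet S = ⟨p,p⟩; thus the derivative of φ₁ is conformal on the paravector directions with scaling factor −4|κ|⁴.) -/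

import Mathlib

open Quaternion

noncomputable section

/-- The involution `q* = a + bi + cj - dk` on quaternions (Clifford reversion). -/
def qstar (q : ℍ[ℝ]) : ℍ[ℝ] := ⟨q.re, q.imI, q.imJ, -q.imK⟩

/-- The involution `q' = a - bi - cj + dk` on quaternions. -/
def qprime (q : ℍ[ℝ]) : ℍ[ℝ] := ⟨q.re, -q.imI, -q.imJ, q.imK⟩

/-- A paravector is an element of `ℝ + ℝi + ℝj`, i.e. a quaternion with zero `k`-component. -/
def IsParavector (q : ℍ[ℝ]) : Prop := q.imK = 0

/-- The quaternion `k`. -/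
def qk : ℍ[ℝ] := ⟨0, 0, 0, 1⟩

/-- A quaternionic spinor: a pair `(ξ, η) ≠ (0,0)` with `ξ * conj η` a paravector. -/
def IsSpinor (κ : ℍ[ℝ] × ℍ[ℝ]) : Prop := κ ≠ 0 ∧ IsParavector (κ.1 * star κ.2)

/-- The bracket `{κ₁, κ₂} = ξ₁* η₂ − η₁* ξ₂`. -/
def bracket (κ₁ κ₂ : ℍ[ℝ] × ℍ[ℝ]) : ℍ[ℝ] := qstar κ₁.1 * κ₂.2 - qstar κ₁.2 * κ₂.1

/-- Right multiplication `κ x = (ξ x, η x)`. -/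
def rmul (κ : ℍ[ℝ] × ℍ[ℝ]) (x : ℍ[ℝ]) : ℍ[ℝ] × ℍ[ℝ] := (κ.1 * x, κ.2 * x)

/-- The complementary pair `κ̌ = (η', −ξ')`. -/
def qcheck (κ : ℍ[ℝ] × ℍ[ℝ]) : ℍ[ℝ] × ℍ[ℝ] := (qprime κ.2, -qprime κ.1)

/-- The real inner product on `ℍ²`: `⟨κ₁, κ₂⟩ = Re (ξ₁ ξ̄₂ + η₁ η̄₂)`. -/
def qinner (κ₁ κ₂ : ℍ[ℝ] × ℍ[ℝ]) : ℝ := (κ₁.1 * star κ₂.1 + κ₁.2 * star κ₂.2).re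

/-- The squared norm `|κ|² = |ξ|² + |η|²` on `ℍ²`. -/
def qnsq (κ : ℍ[ℝ] × ℍ[ℝ]) : ℝ := Quaternion.normSq κ.1 + Quaternion.normSq κ.2

/-- The pseudo-determinant of a 2×2 quaternionic matrix: `pdet [[a,b],[c,d]] = a* d − c* b`. -/
def pdet (A : Matrix (Fin 2) (Fin 2) ℍ[ℝ]) : ℍ[ℝ] := qstar (A 0 0) * A 1 1 - qstar (A 1 0) * A 0 1

/-- A Clifford matrix: columns are quaternionic spinors and the pseudo-determinant is 1. -/
def IsClifford (A : Matrix (Fin 2) (Fin 2) ℍ[ℝ]) : Prop :=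
  IsSpinor (A 0 0, A 1 0) ∧ IsSpinor (A 0 1, A 1 1) ∧ pdet A = 1

/-- Matrix-vector action of a 2×2 quaternionic matrix on a column vector in `ℍ²`. -/
def mact (A : Matrix (Fin 2) (Fin 2) ℍ[ℝ]) (κ : ℍ[ℝ] × ℍ[ℝ]) : ℍ[ℝ] × ℍ[ℝ] :=
  (A 0 0 * κ.1 + A 0 1 * κ.2, A 1 0 * κ.1 + A 1 1 * κ.2)

/-- The derivative matrix `D(v) = κ (κ̌v)̄ᵀ + (κ̌v) κ̄ᵀ` of the map `φ₁(κ) = κ κ̄ᵀ`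
in the direction `κ̌v`. -/
def Dmat (κ : ℍ[ℝ] × ℍ[ℝ]) (v : ℍ[ℝ]) : Matrix (Fin 2) (Fin 2) ℍ[ℝ] :=
  !![κ.1 * star v * qstar κ.2 + qprime κ.2 * v * star κ.1,
     -(κ.1 * star v * qstar κ.1) + qprime κ.2 * v * star κ.2;
     κ.2 * star v * qstar κ.2 - qprime κ.1 * v * star κ.1,
     -(κ.2 * star v * qstar κ.1) - qprime κ.1 * v * star κ.2]

theorem qstar_re' (q : ℍ[ℝ]) : (qstar q).re = q.re := rfl
theorem qstar_imI' (q : ℍ[ℝ]) : (qstar q).imI = q.imI := rfl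
theorem qstar_imJ' (q : ℍ[ℝ]) : (qstar q).imJ = q.imJ := rfl
theorem qstar_imK' (q : ℍ[ℝ]) : (qstar q).imK = -q.imK := rfl
theorem qprime_re' (q : ℍ[ℝ]) : (qprime q).re = q.re := rfl
theorem qprime_imI' (q : ℍ[ℝ]) : (qprime q).imI = -q.imI := rfl
theorem qprime_imJ' (q : ℍ[ℝ]) : (qprime q).imJ = -q.imJ := rfl
theorem qprime_imK' (q : ℍ[ℝ]) : (qprime q).imK = q.imK := rfl

set_option maxHeartbeats 3200000 in
set_option maxRecDepth 8000 in
/-- The derivative of `φ₁` is conformal on paravector directions with scaling factor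
`−4|κ|⁴`: polarising the pseudo-determinant,
`2 (pdet (D(v)+D(w)) − pdet D(v) − pdet D(w)) = −4 |κ|⁴ Re(v w̄)`. -/
theorem derivative_conformal (κ : ℍ[ℝ] × ℍ[ℝ]) (hκ : IsSpinor κ) (v w : ℍ[ℝ])
    (hv : IsParavector v) (hw : IsParavector w) :
    2 * (pdet (Dmat κ v + Dmat κ w) - pdet (Dmat κ v) - pdet (Dmat κ w)) =
      -(((4 * qnsq κ ^ 2 * (v * star w).re : ℝ)) : ℍ[ℝ]) := by
  rw [show (2:ℍ[ℝ]) = ((2:ℝ):ℍ[ℝ]) from by rw [show ((2:ℝ):ℍ[ℝ]) = ((2:ℕ):ℍ[ℝ]) from Quaternion.coe_natCast 2]; norm_num]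
  obtain ⟨-, hpar⟩ := hκ
  obtain ⟨ξ, η⟩ := κ
  simp only [IsParavector] at hv hw hpar
  simp only [Quaternion.imK_mul, Quaternion.re_star, Quaternion.imI_star,
    Quaternion.imJ_star, Quaternion.imK_star] at hpar
  simp only [Dmat, pdet, qstar_re', qstar_imI', qstar_imJ', qstar_imK', qprime_re', qprime_imI',
      qprime_imJ', qprime_imK', qnsq, Quaternion.ext_iff, Matrix.add_apply,
    Matrix.cons_val', Matrix.cons_val_zero, Matrix.cons_val_one, Matrix.head_cons,
    Matrix.empty_val', Matrix.cons_val_fin_one, Matrix.head_fin_const, Matrix.of_apply,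
    Quaternion.re_mul, Quaternion.imI_mul, Quaternion.imJ_mul, Quaternion.imK_mul,
    Quaternion.re_add, Quaternion.imI_add, Quaternion.imJ_add, Quaternion.imK_add,
    Quaternion.re_sub, Quaternion.imI_sub, Quaternion.imJ_sub, Quaternion.imK_sub,
    Quaternion.re_neg, Quaternion.imI_neg, Quaternion.imJ_neg, Quaternion.imK_neg,
    Quaternion.re_star, Quaternion.imI_star, Quaternion.imJ_star, Quaternion.imK_star,
    Quaternion.re_coe, Quaternion.imI_coe, Quaternion.imJ_coe, Quaternion.imK_coe,
    Quaternion.normSq_def', QuaternionAlgebra.re, QuaternionAlgebra.imI, QuaternionAlgebra.imJ, QuaternionAlgebra.imK,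
    Quaternion.re_natCast, Quaternion.imI_natCast, Quaternion.imJ_natCast, Quaternion.imK_natCast, Nat.cast_ofNat, hv, hw]
  refine ⟨?_, ?_, ?_, ?_⟩
  · linear_combination (16 * (v.re * w.re + v.imI * w.imI + v.imJ * w.imJ) * (ξ.imK * η.re + ξ.imJ * η.imI - ξ.imI * η.imJ - ξ.re * η.imK)) * hpar
  · ring
  · ring
  · ring
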